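/- arXiv:2006.08848 — 2 statements merged into one kernel-verified Lean document; each statement's English description precedes it below -/
import Mathlib

section
/- Let F_1, …, F_N be L_F-smooth convex functions and F = (1/N)∑ F_i with minimizer w*. Then for all w, (1/N)∑_{i=1}^N ‖∇F_i(w) - ∇F(w)‖² ≤ 4 L_F (F(w) - F(w*)) + 2 (1/N)∑_{i=1}^N ‖∇F_i(w*)‖². -/
open Set Finset InnerProductSpace

variable {E : Type*} [NormedAddCommGroup E] [InnerProductSpace ℝ E] [CompleteSpace E]

lemma line_hasDerivAt (f : E → ℝ) (f' : E → E) (hf : ∀ x, HasGradientAt f (f' x) x)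
    (x v : E) (t : ℝ) :
    HasDerivAt (fun s : ℝ => f (x + s • v)) ⟪f' (x + t • v), v⟫_ℝ t := by
  have hline : HasDerivAt (fun s : ℝ => x + s • v) v t := by
    simpa using ((hasDerivAt_id t).smul_const v).const_add x
  have := (hf (x + t • v)).hasFDerivAt.comp_hasDerivAt t hline
  simp at this
  exact this

lemma first_order (f : E → ℝ) (f' : E → E) (hconv : ConvexOn ℝ univ f)
    (hf : ∀ x, HasGradientAt f (f' x) x) (x z : E) :
    f x + ⟪f' x, z - x⟫_ℝ ≤ f z := by
  set v := z - x with hv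
  have hφ : ConvexOn ℝ univ (fun t : ℝ => f (x + t • v)) := by
    have h := hconv.comp_affineMap (AffineMap.lineMap x z)
    have he : (fun t : ℝ => f (x + t • v)) = f ∘ (AffineMap.lineMap x z) := by
      funext t
      simp [AffineMap.lineMap_apply, hv, add_comm]
    rw [he]
    simpa using h
  have hd0 : HasDerivAt (fun t : ℝ => f (x + t • v)) ⟪f' x, v⟫_ℝ 0 := by
    simpa using line_hasDerivAt f f' hf x v 0
  have hs := hφ.le_slope_of_hasDerivAt (mem_univ (0:ℝ)) (mem_univ (1:ℝ)) one_pos hd0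
  have hslope : slope (fun t : ℝ => f (x + t • v)) 0 1 = f z - f x := by
    simp [slope, hv]
  rw [hslope] at hs
  linarith

lemma smooth_ub (f : E → ℝ) (f' : E → E) (L : ℝ)
    (hf : ∀ x, HasGradientAt f (f' x) x)
    (hlip : ∀ x y, ‖f' x - f' y‖ ≤ L * ‖x - y‖) (x y : E) :
    f y ≤ f x + ⟪f' x, y - x⟫_ℝ + L / 2 * ‖y - x‖ ^ 2 := by
  set v := y - x with hv
  set ψ : ℝ → ℝ := fun t => f (x + t • v) - t * ⟪f' x, v⟫_ℝ - L * t ^ 2 / 2 * ‖v‖ ^ 2 with hψ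
  have hder : ∀ t : ℝ, HasDerivAt ψ
      (⟪f' (x + t • v), v⟫_ℝ - ⟪f' x, v⟫_ℝ - L * t * ‖v‖ ^ 2) t := by
    intro t
    have h1 := line_hasDerivAt f f' hf x v t
    have h2 : HasDerivAt (fun t : ℝ => t * ⟪f' x, v⟫_ℝ) ⟪f' x, v⟫_ℝ t := by
      simpa using (hasDerivAt_id t).mul_const ⟪f' x, v⟫_ℝ
    have h3 : HasDerivAt (fun t : ℝ => L * t ^ 2 / 2 * ‖v‖ ^ 2) (L * t * ‖v‖ ^ 2) t := by
      have : HasDerivAt (fun t : ℝ => t ^ 2) (2 * t) t := by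
        simpa using hasDerivAt_pow 2 t
      have := ((this.const_mul L).div_const 2).mul_const (‖v‖ ^ 2)
      refine this.congr_deriv ?_
      ring
    exact (h1.sub h2).sub h3
  have hanti : AntitoneOn ψ (Icc (0:ℝ) 1) := by
    apply antitoneOn_of_deriv_nonpos (convex_Icc 0 1)
    · exact fun t _ => (hder t).continuousAt.continuousWithinAt
    · intro t _
      exact (hder t).differentiableAt.differentiableWithinAt
    · intro t ht
      rw [interior_Icc] at ht
      rw [(hder t).deriv]
      have hcs : ⟪f' (x + t • v) - f' x, v⟫_ℝ ≤ ‖f' (x + t • v) - f' x‖ * ‖v‖ :=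
        real_inner_le_norm _ _
      have hl : ‖f' (x + t • v) - f' x‖ ≤ L * (t * ‖v‖) := by
        have := hlip (x + t • v) x
        simpa [norm_smul, abs_of_pos ht.1, mul_assoc] using this
      have h2 : ⟪f' (x + t • v), v⟫_ℝ - ⟪f' x, v⟫_ℝ = ⟪f' (x + t • v) - f' x, v⟫_ℝ := by
        rw [inner_sub_left]
      nlinarith [norm_nonneg v, norm_nonneg (f' (x + t • v) - f' x)]
  have h01 := hanti (by norm_num : (0:ℝ) ∈ Icc (0:ℝ) 1) (by norm_num : (1:ℝ) ∈ Icc (0:ℝ) 1)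
    (by norm_num)
  have hψ0 : ψ 0 = f x := by simp [hψ]
  have hψ1 : ψ 1 = f y - ⟪f' x, v⟫_ℝ - L / 2 * ‖v‖ ^ 2 := by
    have : x + v = y := by rw [hv]; abel
    simp [hψ, this]
  rw [hψ0, hψ1] at h01
  linarith

lemma cocoercive (f : E → ℝ) (f' : E → E) (L : ℝ) (hL : 0 < L)
    (hconv : ConvexOn ℝ univ f)
    (hf : ∀ x, HasGradientAt f (f' x) x)
    (hlip : ∀ x y, ‖f' x - f' y‖ ≤ L * ‖x - y‖) (x y : E) :
    ‖f' x - f' y‖ ^ 2 ≤ 2 * L * (f x - f y - ⟪f' y, x - y⟫_ℝ) := by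
  set g : E → ℝ := fun z => f z - ⟪f' y, z⟫_ℝ with hg
  set g' : E → E := fun z => f' z - f' y with hg'
  have hgd : ∀ z, HasGradientAt g (g' z) z := by
    intro z
    have h1 : HasFDerivAt (fun u : E => ⟪f' y, u⟫_ℝ) (toDual ℝ E (f' y)) z :=
      (toDual ℝ E (f' y)).hasFDerivAt
    have h2 := (hf z).hasFDerivAt.sub h1
    have h3 : toDual ℝ E (f' z) - toDual ℝ E (f' y) = toDual ℝ E (g' z) := by
      rw [hg']; simp [map_sub]
    rw [h3] at h2
    have := h2.hasGradientAt
    simp only [LinearIsometryEquiv.symm_apply_apply] at this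
    exact this
  have hgconv : ConvexOn ℝ univ g := by
    refine ⟨convex_univ, fun u _ v _ a b ha hb hab => ?_⟩
    have := hconv.2 (mem_univ u) (mem_univ v) ha hb hab
    simp only [hg, smul_eq_mul]
    rw [inner_add_right, real_inner_smul_right, real_inner_smul_right]
    dsimp at this ⊢
    linarith
  have hglip : ∀ u z, ‖g' u - g' z‖ ≤ L * ‖u - z‖ := by
    intro u z
    have : g' u - g' z = f' u - f' z := by rw [hg']; exact sub_sub_sub_cancel_right _ _ _
    rw [this]; exact hlip u z
  have hgy : g' y = 0 := by rw [hg']; simp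
  set p : E := x - L⁻¹ • g' x with hp
  have key1 : g y ≤ g p := by
    have := first_order g g' hgconv hgd y p
    rw [hgy] at this
    simpa using this
  have key2 : g p ≤ g x - 1 / (2 * L) * ‖g' x‖ ^ 2 := by
    have h := smooth_ub g g' L hgd hglip x p
    have hpx : p - x = -(L⁻¹ • g' x) := by rw [hp]; abel
    rw [hpx] at h
    have hi : ⟪g' x, -(L⁻¹ • g' x)⟫_ℝ = -(L⁻¹ * ‖g' x‖ ^ 2) := by
      rw [inner_neg_right, real_inner_smul_right, real_inner_self_eq_norm_sq]
    have hn : ‖-(L⁻¹ • g' x)‖ ^ 2 = L⁻¹ ^ 2 * ‖g' x‖ ^ 2 := by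
      rw [norm_neg, norm_smul, mul_pow, Real.norm_eq_abs, sq_abs]
    rw [hi, hn] at h
    have hL' : L ≠ 0 := ne_of_gt hL
    calc g p ≤ g x + -(L⁻¹ * ‖g' x‖ ^ 2) + L / 2 * (L⁻¹ ^ 2 * ‖g' x‖ ^ 2) := h
      _ = g x - 1 / (2 * L) * ‖g' x‖ ^ 2 := by field_simp; ring
  have hcomb : g y ≤ g x - 1 / (2 * L) * ‖g' x‖ ^ 2 := key1.trans key2
  have hgxv : g' x = f' x - f' y := rfl
  have hEx : g x = f x - ⟪f' y, x⟫_ℝ := rfl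
  have hEy : g y = f y - ⟪f' y, y⟫_ℝ := rfl
  have hinner : ⟪f' y, x - y⟫_ℝ = ⟪f' y, x⟫_ℝ - ⟪f' y, y⟫_ℝ := inner_sub_right _ _ _
  rw [hEx, hEy, hgxv] at hcomb
  rw [hinner]
  have h2L : (0:ℝ) < 2 * L := by linarith
  have hQ : ‖f' x - f' y‖ ^ 2 = 2 * L * (1 / (2 * L) * ‖f' x - f' y‖ ^ 2) := by
    field_simp
  rw [hQ]
  have hA : 1 / (2 * L) * ‖f' x - f' y‖ ^ 2 ≤
      f x - f y - (⟪f' y, x⟫_ℝ - ⟪f' y, y⟫_ℝ) := by linarith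
  exact mul_le_mul_of_nonneg_left hA h2L.le

lemma variance_le {N : ℕ} (hN : 0 < N) (a : Fin N → E) :
    ∑ i, ‖a i - (1 / N : ℝ) • ∑ j, a j‖ ^ 2 ≤ ∑ i, ‖a i‖ ^ 2 := by
  set c : E := (1 / N : ℝ) • ∑ j, a j with hc
  have hNR : (0:ℝ) < N := by exact_mod_cast hN
  have hsum : ∑ j, a j = (N : ℝ) • c := by
    rw [hc, smul_smul]
    rw [mul_one_div, div_self (ne_of_gt hNR), one_smul]
  have hexp : ∀ i, ‖a i - c‖ ^ 2 = ‖a i‖ ^ 2 - 2 * ⟪a i, c⟫_ℝ + ‖c‖ ^ 2 := fun i =>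
    norm_sub_sq_real (a i) c
  have hsum2 : ∑ i, ‖a i - c‖ ^ 2
      = ∑ i, ‖a i‖ ^ 2 - 2 * (N : ℝ) * ‖c‖ ^ 2 + (N : ℝ) * ‖c‖ ^ 2 := by
    rw [Finset.sum_congr rfl fun i _ => hexp i]
    rw [Finset.sum_add_distrib, Finset.sum_sub_distrib]
    rw [← Finset.mul_sum, ← sum_inner, hsum, real_inner_smul_left,
      real_inner_self_eq_norm_sq]
    simp [Finset.card_univ, nsmul_eq_mul]
    ring
  rw [hsum2]
  nlinarith [sq_nonneg ‖c‖, hNR]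

theorem bounded_diversity_strongly_convex
    {d N : ℕ} (hN : 0 < N)
    (F : Fin N → EuclideanSpace ℝ (Fin d) → ℝ)
    (F' : Fin N → EuclideanSpace ℝ (Fin d) → EuclideanSpace ℝ (Fin d))
    (LF : ℝ)
    (hconv : ∀ i, ConvexOn ℝ univ (F i))
    (hdiff : ∀ i x, HasGradientAt (F i) (F' i x) x)
    (hlip : ∀ i x y, ‖F' i x - F' i y‖ ≤ LF * ‖x - y‖)
    (wstar : EuclideanSpace ℝ (Fin d))
    (hmin : ∀ w, (1 / N : ℝ) * ∑ i, F i wstar ≤ (1 / N : ℝ) * ∑ i, F i w)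
    (hgradmin : (1 / N : ℝ) • ∑ i, F' i wstar = 0)
    (w : EuclideanSpace ℝ (Fin d)) :
    (1 / N : ℝ) * ∑ i, ‖F' i w - (1 / N : ℝ) • ∑ j, F' j w‖ ^ 2 ≤
      4 * LF * ((1 / N : ℝ) * ∑ i, F i w - (1 / N : ℝ) * ∑ i, F i wstar)
        + 2 * ((1 / N : ℝ) * ∑ i, ‖F' i wstar‖ ^ 2) := by
  have hNR : (0:ℝ) < N := by exact_mod_cast hN
  have hcN : (0:ℝ) < (1 / N : ℝ) := by positivity
  -- sum of gradients at wstar is zero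
  have hsum0 : ∑ i, F' i wstar = 0 := by
    rcases smul_eq_zero.mp hgradmin with h | h
    · exact absurd h (ne_of_gt hcN)
    · exact h
  -- first order conditions summed
  have hfo1 : ∀ i, F i wstar + ⟪F' i wstar, w - wstar⟫_ℝ ≤ F i w := fun i =>
    first_order (F i) (F' i) (hconv i) (hdiff i) wstar w
  have hinnersum : ∑ i, ⟪F' i wstar, w - wstar⟫_ℝ = 0 := by
    rw [← sum_inner, hsum0, inner_zero_left]
  by_cases hLF : 0 < LF
  · -- main case
    -- Step 1 : variance bound
    have step1 : ∑ i, ‖F' i w - (1 / N : ℝ) • ∑ j, F' j w‖ ^ 2 ≤ ∑ i, ‖F' i w‖ ^ 2 :=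
      variance_le hN (fun i => F' i w)
    -- Step 2 : pointwise split
    have step2 : ∀ i, ‖F' i w‖ ^ 2 ≤
        2 * ‖F' i w - F' i wstar‖ ^ 2 + 2 * ‖F' i wstar‖ ^ 2 := by
      intro i
      have h := norm_add_le (F' i w - F' i wstar) (F' i wstar)
      rw [sub_add_cancel] at h
      nlinarith [sq_nonneg (‖F' i w - F' i wstar‖ - ‖F' i wstar‖),
        norm_nonneg (F' i w - F' i wstar), norm_nonneg (F' i wstar),
        norm_nonneg (F' i w)]
    -- Step 3 : cocoercivity
    have step3 : ∀ i, ‖F' i w - F' i wstar‖ ^ 2 ≤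
        2 * LF * (F i w - F i wstar - ⟪F' i wstar, w - wstar⟫_ℝ) := fun i =>
      cocoercive (F i) (F' i) LF hLF (hconv i) (hdiff i) (hlip i) w wstar
    have sum3 : ∑ i, ‖F' i w - F' i wstar‖ ^ 2 ≤
        2 * LF * (∑ i, F i w - ∑ i, F i wstar) := by
      calc ∑ i, ‖F' i w - F' i wstar‖ ^ 2
          ≤ ∑ i, 2 * LF * (F i w - F i wstar - ⟪F' i wstar, w - wstar⟫_ℝ) :=
            Finset.sum_le_sum fun i _ => step3 i
        _ = 2 * LF * (∑ i, F i w - ∑ i, F i wstar) := by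
            rw [← Finset.mul_sum, Finset.sum_sub_distrib, Finset.sum_sub_distrib, hinnersum]
            ring
    have sum2 : ∑ i, ‖F' i w‖ ^ 2 ≤
        2 * ∑ i, ‖F' i w - F' i wstar‖ ^ 2 + 2 * ∑ i, ‖F' i wstar‖ ^ 2 := by
      calc ∑ i, ‖F' i w‖ ^ 2
          ≤ ∑ i, (2 * ‖F' i w - F' i wstar‖ ^ 2 + 2 * ‖F' i wstar‖ ^ 2) :=
            Finset.sum_le_sum fun i _ => step2 i
        _ = _ := by rw [Finset.sum_add_distrib, ← Finset.mul_sum, ← Finset.mul_sum]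
    have total : ∑ i, ‖F' i w - (1 / N : ℝ) • ∑ j, F' j w‖ ^ 2 ≤
        4 * LF * (∑ i, F i w - ∑ i, F i wstar) + 2 * ∑ i, ‖F' i wstar‖ ^ 2 := by
      linarith
    calc (1 / N : ℝ) * ∑ i, ‖F' i w - (1 / N : ℝ) • ∑ j, F' j w‖ ^ 2
        ≤ (1 / N : ℝ) * (4 * LF * (∑ i, F i w - ∑ i, F i wstar)
            + 2 * ∑ i, ‖F' i wstar‖ ^ 2) :=
          mul_le_mul_of_nonneg_left total hcN.le
      _ = 4 * LF * ((1 / N : ℝ) * ∑ i, F i w - (1 / N : ℝ) * ∑ i, F i wstar)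
            + 2 * ((1 / N : ℝ) * ∑ i, ‖F' i wstar‖ ^ 2) := by ring
  · -- degenerate case : gradients are constant
    push_neg at hLF
    have hconst : ∀ i (x : EuclideanSpace ℝ (Fin d)), F' i x = F' i wstar := by
      intro i x
      have h1 := hlip i x wstar
      have h2 : LF * ‖x - wstar‖ ≤ 0 :=
        mul_nonpos_of_nonpos_of_nonneg hLF (norm_nonneg _)
      have h3 : ‖F' i x - F' i wstar‖ ≤ 0 := h1.trans h2
      have := le_antisymm h3 (norm_nonneg _)
      rw [← sub_eq_zero]
      exact norm_eq_zero.mp this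
    -- F sums equal at w and wstar
    have hfo2 : ∀ i, F i w + ⟪F' i w, wstar - w⟫_ℝ ≤ F i wstar := fun i =>
      first_order (F i) (F' i) (hconv i) (hdiff i) w wstar
    have hinnersum2 : ∑ i, ⟪F' i w, wstar - w⟫_ℝ = 0 := by
      rw [← sum_inner]
      have : ∑ i, F' i w = 0 := by
        rw [Finset.sum_congr rfl fun i _ => hconst i w, hsum0]
      rw [this, inner_zero_left]
    have hle1 : ∑ i, F i wstar ≤ ∑ i, F i w := by
      have := Finset.sum_le_sum fun i (_ : i ∈ Finset.univ) => hfo1 i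
      rw [Finset.sum_add_distrib, hinnersum] at this
      linarith
    have hle2 : ∑ i, F i w ≤ ∑ i, F i wstar := by
      have := Finset.sum_le_sum fun i (_ : i ∈ Finset.univ) => hfo2 i
      rw [Finset.sum_add_distrib, hinnersum2] at this
      linarith
    have heq : ∑ i, F i w = ∑ i, F i wstar := le_antisymm hle2 hle1
    -- LHS equals (1/N) ∑ ‖F' i wstar‖²
    have hG : (1 / N : ℝ) • ∑ j, F' j w = 0 := by
      rw [Finset.sum_congr rfl fun i _ => hconst i w, hsum0, smul_zero]
    have hLHS : ∑ i, ‖F' i w - (1 / N : ℝ) • ∑ j, F' j w‖ ^ 2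
        = ∑ i, ‖F' i wstar‖ ^ 2 := by
      refine Finset.sum_congr rfl fun i _ => ?_
      rw [hG, sub_zero, hconst i w]
    rw [hLHS, heq]
    have hpos : 0 ≤ (1 / N : ℝ) * ∑ i, ‖F' i wstar‖ ^ 2 := by positivity
    linarith
end

section
/- Let f_i be L-smooth functions and F_i the Moreau envelopes F_i(w) = min_θ { f_i(θ) + (λ/2)‖θ - w‖² } with λ > 2√2 L, and F = (1/N)∑ F_i. Assume the diversity bound (1/N)∑_i ‖∇f_i(w) - ∇f(w)‖² ≤ σ_f² holds pointwise (where f = (1/N)∑ f_i). Then (1/N)∑_{i=1}^N ‖∇F_i(w) - ∇F(w)‖² ≤ (8L²/(λ² - 8L²)) ‖∇F(w)‖² + (2λ²/(λ² - 8L²)) σ_f². -/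
open Finset

section aux
variable {V : Type*} [NormedAddCommGroup V] [InnerProductSpace ℝ V]

lemma sq_norm_add_le' (a b : V) : ‖a + b‖ ^ 2 ≤ 2 * ‖a‖ ^ 2 + 2 * ‖b‖ ^ 2 := by
  have h := norm_add_le a b
  nlinarith [norm_nonneg a, norm_nonneg b, sq_nonneg (‖a‖ - ‖b‖), norm_nonneg (a + b)]

lemma var_ident {N : ℕ} (hN : (N : ℝ) ≠ 0) (x : Fin N → V) :
    ∑ i, ‖x i - (1 / N : ℝ) • ∑ j, x j‖ ^ 2
      = ∑ i, ‖x i‖ ^ 2 - N * ‖(1 / N : ℝ) • ∑ j, x j‖ ^ 2 := by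
  set m := (1 / N : ℝ) • ∑ j, x j with hm
  have hsum : ∑ j, x j = (N : ℝ) • m := by
    rw [hm, smul_smul, mul_one_div, div_self hN, one_smul]
  have h1 : ∀ i ∈ Finset.univ, ‖x i - m‖ ^ 2
      = ‖x i‖ ^ 2 - 2 * (inner ℝ (x i) m : ℝ) + ‖m‖ ^ 2 :=
    fun i _ => norm_sub_sq_real _ _
  rw [Finset.sum_congr rfl h1, Finset.sum_add_distrib, Finset.sum_sub_distrib,
    Finset.sum_const, ← Finset.mul_sum, ← sum_inner, hsum, real_inner_smul_left,
    real_inner_self_eq_norm_sq]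
  simp [Finset.card_univ]
  ring

end aux

theorem bounded_diversity_moreau_nonconvex
    {d N : ℕ} (hN : 0 < N)
    (f : Fin N → EuclideanSpace ℝ (Fin d) → ℝ)
    (f' : Fin N → EuclideanSpace ℝ (Fin d) → EuclideanSpace ℝ (Fin d))
    (L lam σf : ℝ) (hL : 0 ≤ L) (hlam : 2 * Real.sqrt 2 * L < lam)
    (hdiff : ∀ i x, HasGradientAt (f i) (f' i x) x)
    (hlip : ∀ i x y, ‖f' i x - f' i y‖ ≤ L * ‖x - y‖)
    (θhat : Fin N → EuclideanSpace ℝ (Fin d) → EuclideanSpace ℝ (Fin d))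
    (hmin : ∀ i w θ, f i (θhat i w) + lam / 2 * ‖θhat i w - w‖ ^ 2 ≤
      f i θ + lam / 2 * ‖θ - w‖ ^ 2)
    (hfoc : ∀ i w, f' i (θhat i w) + lam • (θhat i w - w) = 0)
    (hdiv : ∀ y : EuclideanSpace ℝ (Fin d),
      (1 / N : ℝ) * ∑ i, ‖f' i y - (1 / N : ℝ) • ∑ j, f' j y‖ ^ 2 ≤ σf ^ 2)
    (w : EuclideanSpace ℝ (Fin d)) :
    (1 / N : ℝ) *
        ∑ i, ‖lam • (w - θhat i w) - (1 / N : ℝ) • ∑ j, lam • (w - θhat j w)‖ ^ 2 ≤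
      8 * L ^ 2 / (lam ^ 2 - 8 * L ^ 2) *
          ‖(1 / N : ℝ) • ∑ j, lam • (w - θhat j w)‖ ^ 2
        + 2 * lam ^ 2 / (lam ^ 2 - 8 * L ^ 2) * σf ^ 2 := by
  have hNR : (0 : ℝ) < N := by exact_mod_cast hN
  have hNne : (N : ℝ) ≠ 0 := ne_of_gt hNR
  have hs2 : (Real.sqrt 2) ^ 2 = 2 := Real.sq_sqrt (by norm_num)
  have hs2nn : 0 ≤ Real.sqrt 2 := Real.sqrt_nonneg 2
  have hlam0 : 0 < lam := lt_of_le_of_lt (by positivity) hlam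
  have hlam2 : 8 * L ^ 2 < lam ^ 2 := by
    have h8 : (2 * Real.sqrt 2 * L) ^ 2 = 8 * L ^ 2 := by
      rw [mul_pow, mul_pow, hs2]; ring
    have h9 : (2 * Real.sqrt 2 * L) * (2 * Real.sqrt 2 * L) < lam * lam :=
      mul_lt_mul'' hlam hlam (by positivity) (by positivity)
    nlinarith [h8, h9]
  have hc : 0 < lam ^ 2 - 8 * L ^ 2 := by linarith
  set g : Fin N → EuclideanSpace ℝ (Fin d) := fun i => lam • (w - θhat i w) with hg
  set h : Fin N → EuclideanSpace ℝ (Fin d) := fun i => f' i w with hh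
  set δ : Fin N → EuclideanSpace ℝ (Fin d) := fun i => g i - h i with hδ
  -- g i equals f' i (θhat i w)
  have hgeq : ∀ i, g i = f' i (θhat i w) := by
    intro i
    have h0 := hfoc i w
    have : f' i (θhat i w) = -(lam • (θhat i w - w)) := eq_neg_of_add_eq_zero_left h0
    rw [hg]
    simp only [this, ← smul_neg, neg_sub]
  have hgnorm : ∀ i, ‖g i‖ = lam * ‖θhat i w - w‖ := by
    intro i
    rw [hg]
    simp only
    rw [norm_smul, Real.norm_eq_abs, abs_of_pos hlam0, norm_sub_rev]
  -- Lipschitz bound on δ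
  have hδbd : ∀ i, lam ^ 2 * ‖δ i‖ ^ 2 ≤ L ^ 2 * ‖g i‖ ^ 2 := by
    intro i
    have h1 : ‖δ i‖ ≤ L * ‖θhat i w - w‖ := by
      rw [hδ]; simp only [hh]
      rw [hgeq i]
      exact hlip i (θhat i w) w
    have h2 : lam * ‖δ i‖ ≤ L * ‖g i‖ := by
      rw [hgnorm i]
      calc lam * ‖δ i‖ ≤ lam * (L * ‖θhat i w - w‖) := by
            exact mul_le_mul_of_nonneg_left h1 (le_of_lt hlam0)
        _ = L * (lam * ‖θhat i w - w‖) := by ring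
    have h3 : 0 ≤ lam * ‖δ i‖ := by positivity
    nlinarith [norm_nonneg (δ i), norm_nonneg (g i)]
  set gbar := (1 / N : ℝ) • ∑ j, g j with hgbar
  set hbar := (1 / N : ℝ) • ∑ j, h j with hhbar
  set δbar := (1 / N : ℝ) • ∑ j, δ j with hδbar
  have hbarsplit : gbar = δbar + hbar := by
    rw [hgbar, hδbar, hhbar, ← smul_add, ← Finset.sum_add_distrib]
    congr 1
    apply Finset.sum_congr rfl
    intro j _
    rw [hδ]; simp
  -- decomposition bound
  have hdecomp : ∀ i, ‖g i - gbar‖ ^ 2 ≤ 2 * ‖δ i - δbar‖ ^ 2 + 2 * ‖h i - hbar‖ ^ 2 := by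
    intro i
    have : g i - gbar = (δ i - δbar) + (h i - hbar) := by
      rw [hbarsplit, hδ]; beta_reduce; abel
    rw [this]
    exact sq_norm_add_le' _ _
  -- sums
  have hsumδ : ∑ i, ‖δ i - δbar‖ ^ 2 ≤ ∑ i, ‖δ i‖ ^ 2 := by
    rw [hδbar, var_ident hNne]
    have : 0 ≤ (N : ℝ) * ‖(1 / N : ℝ) • ∑ j, δ j‖ ^ 2 := by positivity
    linarith
  have hsumh : ∑ i, ‖h i - hbar‖ ^ 2 ≤ N * σf ^ 2 := by
    have := hdiv w
    have h2 : (1 / N : ℝ) * ∑ i, ‖h i - hbar‖ ^ 2 ≤ σf ^ 2 := this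
    calc ∑ i, ‖h i - hbar‖ ^ 2
        = N * ((1 / N : ℝ) * ∑ i, ‖h i - hbar‖ ^ 2) := by
          field_simp
      _ ≤ N * σf ^ 2 := by
          exact mul_le_mul_of_nonneg_left h2 (le_of_lt hNR)
  have hsumδ2 : lam ^ 2 * ∑ i, ‖δ i‖ ^ 2 ≤ L ^ 2 * ∑ i, ‖g i‖ ^ 2 := by
    rw [Finset.mul_sum, Finset.mul_sum]
    exact Finset.sum_le_sum fun i _ => hδbd i
  set S := ∑ i, ‖g i - gbar‖ ^ 2 with hS
  set T := ∑ i, ‖g i‖ ^ 2 with hT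
  have hTnn : 0 ≤ T := Finset.sum_nonneg fun i _ => by positivity
  have hSnn : 0 ≤ S := Finset.sum_nonneg fun i _ => by positivity
  have hkey : lam ^ 2 * S ≤ 2 * L ^ 2 * T + 2 * lam ^ 2 * (N * σf ^ 2) := by
    have h1 : S ≤ 2 * ∑ i, ‖δ i - δbar‖ ^ 2 + 2 * ∑ i, ‖h i - hbar‖ ^ 2 := by
      rw [hS]
      calc ∑ i, ‖g i - gbar‖ ^ 2
          ≤ ∑ i, (2 * ‖δ i - δbar‖ ^ 2 + 2 * ‖h i - hbar‖ ^ 2) :=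
            Finset.sum_le_sum fun i _ => hdecomp i
        _ = 2 * ∑ i, ‖δ i - δbar‖ ^ 2 + 2 * ∑ i, ‖h i - hbar‖ ^ 2 := by
            rw [Finset.sum_add_distrib, Finset.mul_sum, Finset.mul_sum]
    calc lam ^ 2 * S
        ≤ lam ^ 2 * (2 * ∑ i, ‖δ i - δbar‖ ^ 2 + 2 * ∑ i, ‖h i - hbar‖ ^ 2) :=
          mul_le_mul_of_nonneg_left h1 (sq_nonneg lam)
      _ = 2 * (lam ^ 2 * ∑ i, ‖δ i - δbar‖ ^ 2) + 2 * (lam ^ 2 * ∑ i, ‖h i - hbar‖ ^ 2) := by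
          ring
      _ ≤ 2 * (lam ^ 2 * ∑ i, ‖δ i‖ ^ 2) + 2 * (lam ^ 2 * (N * σf ^ 2)) :=
          add_le_add
            (mul_le_mul_of_nonneg_left (mul_le_mul_of_nonneg_left hsumδ (sq_nonneg lam))
              (by norm_num))
            (mul_le_mul_of_nonneg_left (mul_le_mul_of_nonneg_left hsumh (sq_nonneg lam))
              (by norm_num))
      _ ≤ 2 * (L ^ 2 * T) + 2 * (lam ^ 2 * (N * σf ^ 2)) :=
          add_le_add (mul_le_mul_of_nonneg_left hsumδ2 (by norm_num)) le_rfl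
      _ = 2 * L ^ 2 * T + 2 * lam ^ 2 * (N * σf ^ 2) := by ring
  have hvar : S = T - N * ‖gbar‖ ^ 2 := by
    rw [hS, hT, hgbar]
    exact var_ident hNne g
  -- final algebra
  have hgbarnn : 0 ≤ ‖gbar‖ ^ 2 := sq_nonneg _
  have hkey2 : lam ^ 2 * S ≤ 2 * L ^ 2 * S + 2 * L ^ 2 * (N * ‖gbar‖ ^ 2)
      + 2 * lam ^ 2 * (N * σf ^ 2) := by
    have hT2 : T = S + N * ‖gbar‖ ^ 2 := by linarith only [hvar]
    calc lam ^ 2 * S ≤ 2 * L ^ 2 * T + 2 * lam ^ 2 * (N * σf ^ 2) := hkey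
      _ = 2 * L ^ 2 * S + 2 * L ^ 2 * (N * ‖gbar‖ ^ 2) + 2 * lam ^ 2 * (N * σf ^ 2) := by
        rw [hT2]; ring
  have hS2 : S * (lam ^ 2 - 8 * L ^ 2) ≤ (8 * L ^ 2 * ‖gbar‖ ^ 2 + 2 * lam ^ 2 * σf ^ 2) * N := by
    have h1 : 0 ≤ L ^ 2 * S := mul_nonneg (sq_nonneg L) hSnn
    have h2 : 0 ≤ L ^ 2 * (N * ‖gbar‖ ^ 2) :=
      mul_nonneg (sq_nonneg L) (mul_nonneg (le_of_lt hNR) hgbarnn)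
    linarith only [hkey2, h1, h2]
  have goal' : S / N ≤ (8 * L ^ 2 * ‖gbar‖ ^ 2 + 2 * lam ^ 2 * σf ^ 2) / (lam ^ 2 - 8 * L ^ 2) := by
    rw [div_le_div_iff₀ hNR hc]
    linarith only [hS2]
  calc (1 / N : ℝ) * S = S / N := by ring
    _ ≤ _ := goal'
    _ = 8 * L ^ 2 / (lam ^ 2 - 8 * L ^ 2) * ‖gbar‖ ^ 2
        + 2 * lam ^ 2 / (lam ^ 2 - 8 * L ^ 2) * σf ^ 2 := by ring
end
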